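/- Let 0 < α ≤ 1, r > 0, and p ≥ (2^α/(2rα))^{1/α}. Define Φ(p) = (2 Σ_{m=0}^∞ exp(−2r(pm + p/2)^α))^{1/2}. Then Φ(p) ≤ exp(−r(p/2)^α) · (2 + 2^α/(2α² r p^α))^{1/2} ≤ exp(−r(p/2)^α) · (2 + 1/α)^{1/2}. -/

import Mathlib

open Real Set

lemma key_step (α β : ℝ) (hα0 : 0 < α) (hα1 : α ≤ 1) (hβ : 1 ≤ α * β)
    (s : ℝ) (hs : 1 ≤ s) :
    Real.exp (-β * (s+2)^α) * (2*α^2*β) ≤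
      Real.exp (-β * s^α) * s^(1-α) - Real.exp (-β*(s+2)^α) * (s+2)^(1-α) := by
  have hβ0 : 0 < β := by nlinarith
  set E : ℝ := Real.exp (-β * (s+2)^α) with hE
  set c : ℝ := α^2*β*E with hc
  set h : ℝ → ℝ := fun t => Real.exp (-β * t^α) * t^(1-α) + c * t with hh
  -- h has derivative D t at every t > 0
  have hD : ∀ t : ℝ, 0 < t → HasDerivAt h
      ((Real.exp (-β * t^α) * (-β * (α * t^(α-1)))) * t^(1-α)
        + Real.exp (-β * t^α) * ((1-α) * t^(1-α-1)) + c) t := by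
    intro t ht
    have h1 : HasDerivAt (fun x : ℝ => x ^ α) (α * t^(α-1)) t :=
      Real.hasDerivAt_rpow_const (Or.inl ht.ne')
    have h2 : HasDerivAt (fun x : ℝ => -β * x ^ α) (-β * (α * t^(α-1))) t := h1.const_mul _
    have h3 : HasDerivAt (fun x : ℝ => Real.exp (-β * x ^ α))
        (Real.exp (-β * t^α) * (-β * (α * t^(α-1)))) t := h2.exp
    have h4 : HasDerivAt (fun x : ℝ => x ^ (1-α)) ((1-α) * t^(1-α-1)) t :=
      Real.hasDerivAt_rpow_const (Or.inl ht.ne')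
    have h5 := h3.mul h4
    have h6 : HasDerivAt (fun x : ℝ => c * x) c t := by simpa using (hasDerivAt_id t).const_mul c
    exact h5.add h6
  -- the derivative is ≤ 0 on (s, s+2)
  have hanti : AntitoneOn h (Icc s (s+2)) := by
    have hint : interior (Icc s (s+2)) = Ioo s (s+2) := interior_Icc
    apply antitoneOn_of_deriv_nonpos (convex_Icc _ _)
    · intro t ht
      exact ((hD t (by have := ht.1; linarith)).differentiableAt).continuousAt.continuousWithinAt
    · rw [hint]
      intro t ht
      exact ((hD t (by have := ht.1; linarith)).differentiableAt).differentiableWithinAt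
    · rw [hint]
      intro t ht
      obtain ⟨ht1, ht2⟩ := ht
      have ht0 : 0 < t := by linarith
      rw [(hD t ht0).deriv]
      have htpow : t^(α-1) * t^(1-α) = 1 := by
        rw [← Real.rpow_add ht0]; norm_num
      have he : 0 < Real.exp (-β * t^α) := Real.exp_pos _
      have hEe : E ≤ Real.exp (-β * t^α) := by
        apply Real.exp_le_exp.2
        have : t ^ α ≤ (s+2)^α := Real.rpow_le_rpow ht0.le (by linarith) hα0.le
        nlinarith
      have hta : t ^ (1-α-1) ≤ 1 := by
        apply Real.rpow_le_one_of_one_le_of_nonpos (by linarith) (by linarith)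
      have hta0 : 0 ≤ t ^ (1-α-1) := Real.rpow_nonneg ht0.le _
      -- exp(-βt^α)*(-αβ + (1-α)t^(-α)) + c ≤ 0
      have key : -α*β + (1-α) * t^(1-α-1) ≤ -(α^2*β) := by nlinarith
      have expand : (Real.exp (-β * t^α) * (-β * (α * t^(α-1)))) * t^(1-α)
          + Real.exp (-β * t^α) * ((1-α) * t^(1-α-1))
          = Real.exp (-β * t^α) * (-α*β + (1-α) * t^(1-α-1)) := by
        have : (Real.exp (-β * t^α) * (-β * (α * t^(α-1)))) * t^(1-α)
            = Real.exp (-β * t^α) * (-α*β * (t^(α-1) * t^(1-α))) := by ring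
        rw [this, htpow]; ring
      rw [expand]
      have h7 : Real.exp (-β * t^α) * (-α*β + (1-α) * t^(1-α-1))
          ≤ Real.exp (-β * t^α) * (-(α^2*β)) := by
        exact mul_le_mul_of_nonneg_left key he.le
      have h8 : Real.exp (-β * t^α) * (-(α^2*β)) ≤ -(α^2*β*E) := by nlinarith [mul_le_mul_of_nonneg_left hEe (show (0:ℝ) ≤ α^2*β by positivity)]
      rw [hc]; linarith
  -- apply antitonicity at s and s+2
  have := hanti (left_mem_Icc.2 (by linarith)) (right_mem_Icc.2 (by linarith)) (by linarith)
  simp only [hh] at this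
  have hE1 : Real.exp (-β*(s+2)^α) = E := rfl
  nlinarith [this]

lemma sum_bound (α β : ℝ) (hα0 : 0 < α) (hα1 : α ≤ 1) (hβ : 1 ≤ α * β) :
    Summable (fun m : ℕ => Real.exp (-β * (2*(m:ℝ)+1)^α)) ∧
    ∑' m : ℕ, Real.exp (-β * (2*(m:ℝ)+1)^α) ≤ Real.exp (-β) * (1 + 1/(2*α^2*β)) := by
  have hβ0 : 0 < β := by nlinarith
  have hc0 : (0:ℝ) < 2*α^2*β := by positivity
  set f : ℕ → ℝ := fun m => Real.exp (-β * (2*(m:ℝ)+1)^α) with hf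
  set B : ℕ → ℝ := fun i => Real.exp (-β * (2*(i:ℝ)+1)^α) * (2*(i:ℝ)+1)^(1-α) / (2*α^2*β)
    with hB
  have hstep : ∀ i : ℕ, f (i+1) ≤ B i - B (i+1) := by
    intro i
    have h := key_step α β hα0 hα1 hβ (2*(i:ℝ)+1)
      (by have : (0:ℝ) ≤ (i:ℝ) := Nat.cast_nonneg i; linarith)
    have e1 : (2*(i:ℝ)+1) + 2 = 2*((i:ℕ)+1:ℝ)+1 := by push_cast; ring
    rw [e1] at h
    have : f (i+1) = Real.exp (-β * (2*((i:ℕ)+1:ℝ)+1)^α) := by simp [hf]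
    rw [hB, hf]
    push_cast
    rw [div_sub_div_same, le_div_iff₀ hc0]
    push_cast at h
    linarith
  have hfnn : ∀ n : ℕ, 0 ≤ f (n+1) := fun n => (Real.exp_pos _).le
  have hBnn : ∀ n : ℕ, 0 ≤ B n := fun n => by
    rw [hB]; positivity
  have hpartial : ∀ n : ℕ, ∑ i ∈ Finset.range n, f (i+1) ≤ B 0 := by
    intro n
    calc ∑ i ∈ Finset.range n, f (i+1) ≤ ∑ i ∈ Finset.range n, (B i - B (i+1)) :=
          Finset.sum_le_sum fun i _ => hstep i
      _ = B 0 - B n := Finset.sum_range_sub' B n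
      _ ≤ B 0 := by linarith [hBnn n]
  have hsum1 : Summable (fun n : ℕ => f (n+1)) := summable_of_sum_range_le hfnn hpartial
  have hsum : Summable f := (summable_nat_add_iff 1).mp hsum1
  refine ⟨hsum, ?_⟩
  have htail : ∑' n : ℕ, f (n+1) ≤ B 0 := tsum_le_of_sum_range_le hfnn hpartial
  have hB0 : B 0 = Real.exp (-β) / (2*α^2*β) := by
    simp [hB, Real.one_rpow]
  rw [hB0] at htail
  rw [hsum.tsum_eq_zero_add]
  have hf0 : f 0 = Real.exp (-β) := by simp [hf, Real.one_rpow]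
  rw [hf0]
  have heq : Real.exp (-β) * (1 + 1/(2*α^2*β)) = Real.exp (-β) + Real.exp (-β)/(2*α^2*β) := by
    field_simp
  rw [heq]
  linarith [htail]

theorem phi_subexp_weight_bound (α r p : ℝ) (hα0 : 0 < α) (hα1 : α ≤ 1) (hr : 0 < r)
    (hp : ((2:ℝ) ^ α / (2*r*α)) ^ (1/α) ≤ p) :
    Real.sqrt (2 * ∑' m : ℕ, Real.exp (-(2*r) * (p*(m:ℝ) + p/2) ^ α)) ≤
        Real.exp (-r * (p/2) ^ α) * Real.sqrt (2 + (2:ℝ) ^ α / (2*α^2*r*p^α)) ∧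
      Real.exp (-r * (p/2) ^ α) * Real.sqrt (2 + (2:ℝ) ^ α / (2*α^2*r*p^α)) ≤
        Real.exp (-r * (p/2) ^ α) * Real.sqrt (2 + 1/α) := by
  have hX : (0:ℝ) < (2:ℝ)^α / (2*r*α) := by positivity
  have hp0 : 0 < p := lt_of_lt_of_le (Real.rpow_pos_of_pos hX _) hp
  -- p^α ≥ 2^α/(2rα)
  have hpα : (2:ℝ)^α / (2*r*α) ≤ p ^ α := by
    have h1 : (((2:ℝ)^α / (2*r*α)) ^ (1/α)) ^ α ≤ p ^ α :=
      Real.rpow_le_rpow (Real.rpow_nonneg hX.le _) hp hα0.le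
    rwa [← Real.rpow_mul hX.le, one_div, inv_mul_cancel₀ hα0.ne', Real.rpow_one] at h1
  have hpαpos : (0:ℝ) < p ^ α := Real.rpow_pos_of_pos hp0 α
  have h2a : (0:ℝ) < (2:ℝ)^α := Real.rpow_pos_of_pos two_pos α
  rw [div_le_iff₀ (by positivity : (0:ℝ) < 2*r*α)] at hpα
  set β : ℝ := 2*r*(p/2)^α with hβdef
  have hp2 : (p/2)^α = p^α/(2:ℝ)^α := Real.div_rpow hp0.le (by norm_num) α
  have hβ0 : 0 < β := by rw [hβdef, hp2]; positivity
  have hαβ : 1 ≤ α*β := by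
    rw [hβdef, hp2, show α*(2*r*(p^α/(2:ℝ)^α)) = (p^α*(2*r*α))/(2:ℝ)^α by ring,
      le_div_iff₀ h2a]
    linarith
  obtain ⟨hsum, hT⟩ := sum_bound α β hα0 hα1 hαβ
  have hre : (∑' m : ℕ, Real.exp (-(2*r) * (p*(m:ℝ) + p/2) ^ α))
      = ∑' m : ℕ, Real.exp (-β * (2*(m:ℝ)+1)^α) := by
    apply tsum_congr
    intro m
    congr 1
    rw [show p*(m:ℝ)+p/2 = (p/2)*(2*(m:ℝ)+1) by ring,
      Real.mul_rpow (by positivity) (by positivity), hβdef]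
    ring
  rw [hre]
  set S : ℝ := ∑' m : ℕ, Real.exp (-β * (2*(m:ℝ)+1)^α) with hS
  set E : ℝ := Real.exp (-r * (p/2) ^ α) with hEdef
  set C : ℝ := (2:ℝ) ^ α / (2*α^2*r*p^α) with hCdef
  have hEE : Real.exp (-β) = E * E := by
    rw [hEdef, ← Real.exp_add]; congr 1; rw [hβdef]; ring
  have hCeq : 1/(α^2*β) = C := by
    rw [hCdef, hβdef, hp2]
    field_simp
  have hkey : 2 * S ≤ E * E * (2 + C) := by
    have h1 : 2 * S ≤ Real.exp (-β) * (2 + 1/(α^2*β)) := by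
      have : Real.exp (-β) * (2 + 1/(α^2*β)) = 2 * (Real.exp (-β) * (1 + 1/(2*α^2*β))) := by
        field_simp
      rw [this]; linarith
    rw [hEE, hCeq] at h1
    exact h1
  have hCle : C ≤ 1/α := by
    rw [hCdef, div_le_div_iff₀ (by positivity) hα0]
    nlinarith
  constructor
  · calc Real.sqrt (2 * S) ≤ Real.sqrt (E * E * (2 + C)) := Real.sqrt_le_sqrt hkey
      _ = E * Real.sqrt (2 + C) := by
          rw [Real.sqrt_mul (by positivity), Real.sqrt_mul_self (Real.exp_nonneg _)]
  · exact mul_le_mul_of_nonneg_left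
      (Real.sqrt_le_sqrt (by linarith)) (Real.exp_nonneg _)
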